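/- Let G be a group, S a finite normal subgroup of G, and p a prime not dividing the order of S. Let M be a G-module with p·M = 0 (i.e. an 𝔽_p-linear representation of G) such that the submodule of S-invariants vanishes: M^S = 0. Then the first group cohomology H¹(G, M) vanishes. -/

import Mathlib

/-- Let `G` be a group, `S` a finite normal subgroup of `G`, and `p` a prime
not dividing the order of `S`.  Let `M` be a `G`-module with `p·M = 0` (an `𝔽_p`-linear
representation `A` of `G`) whose submodule of `S`-invariants vanishes.  Then `H¹(G, M) = 0`. -/
theorem stmt14 (p : ℕ) [Fact p.Prime] (G : Type) [Group G]
    (S : Subgroup G) [S.Normal] [Finite S] (hpS : ¬ p ∣ Nat.card S)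
    (A : Rep (ZMod p) G)
    (hinv : Representation.invariants (A.ρ.comp S.subtype) = ⊥) :
    Subsingleton (groupCohomology.H1 A) := by
  suffices hz : ∀ y : groupCohomology.H1 A, y = 0 from ⟨fun a b => (hz a).trans (hz b).symm⟩
  intro y
  refine groupCohomology.H1_induction_on y ?_
  rintro ⟨f, hf⟩
  rw [groupCohomology.H1π_eq_zero_iff, groupCohomology.cocycles₁.coe_mk]
  suffices hex : ∃ x : A, ∀ σ : G, A.ρ σ x - x = f σ by
    obtain ⟨x, hx⟩ := hex
    exact ⟨x, funext fun σ => by simp [groupCohomology.d₀₁_hom_apply, hx]⟩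
  have hco := (groupCohomology.mem_cocycles₁_iff f).1 hf
  haveI : Fintype S := Fintype.ofFinite S
  set n : ℕ := Nat.card S with hn
  have hu : IsUnit ((n : ZMod p)) := by
    rw [ZMod.isUnit_iff_coprime]
    exact (Nat.coprime_comm.1 ((Fact.out : p.Prime).coprime_iff_not_dvd.2 hpS))
  obtain ⟨c, hc⟩ := hu.exists_left_inv
  set T : A := ∑ t : S, f ↑t with hT
  -- key: for s ∈ S, n • f s = T - ρ s T
  have key : ∀ s : S, (n : ZMod p) • f ↑s = T - A.ρ ↑s T := by
    intro s
    have h1 : ∑ t : S, f (↑s * ↑t) = T := by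
      rw [hT]
      exact Fintype.sum_equiv (Equiv.mulLeft s) _ _ (fun t => by
        simp [Subgroup.coe_mul])
    have h2 : ∑ t : S, f (↑s * ↑t) = A.ρ ↑s T + n • f ↑s := by
      simp only [hco]
      rw [Finset.sum_add_distrib, hT, map_sum]
      congr 1
      rw [Finset.sum_const, Finset.card_univ, hn, Nat.card_eq_fintype_card]
    have := h1.symm.trans h2
    rw [← Nat.cast_smul_eq_nsmul (ZMod p)] at this
    rw [eq_sub_iff_add_eq, add_comm]
    exact this.symm
  set x : A := -(c • T) with hx
  have hfs : ∀ s : S, A.ρ ↑s x - x = f ↑s := by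
    intro s
    have := congrArg (fun y => c • y) (key s)
    simp only [smul_sub, smul_smul, hc, one_smul] at this
    rw [hx, map_neg, map_smul, sub_neg_eq_add, neg_add_eq_sub, ← smul_sub, smul_sub]
    exact this.symm
  -- define g := f - coboundary of x, show it vanishes
  set g : G → A := fun σ => f σ - (A.ρ σ x - x) with hg
  have hgco : ∀ a b : G, g (a * b) = A.ρ a (g b) + g a := by
    intro a b
    simp only [hg, hco, map_mul, map_sub, Module.End.mul_apply]
    abel
  have hgS : ∀ s : S, g ↑s = 0 := fun s => by
    simp [hg, hfs s]
  have hgzero : ∀ σ : G, g σ = 0 := by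
    intro σ
    have : g σ ∈ Representation.invariants (A.ρ.comp S.subtype) := by
      intro s
      have hmem : σ⁻¹ * ↑s * σ ∈ S :=
        Subgroup.Normal.conj_mem' ‹S.Normal› ↑s s.2 σ
      have h1 : g (σ * (σ⁻¹ * ↑s * σ)) = g σ := by
        rw [hgco, hgS ⟨_, hmem⟩, map_zero, zero_add]
      have h2 : σ * (σ⁻¹ * ↑s * σ) = ↑s * σ := by group
      have h3 : g (↑s * σ) = A.ρ ↑s (g σ) := by
        rw [hgco, hgS s, add_zero]
      show A.ρ (S.subtype s) (g σ) = g σ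
      rw [Subgroup.coe_subtype, ← h3, ← h2, h1]
    rw [hinv] at this
    simpa using this
  refine ⟨x, fun σ => ?_⟩
  have := hgzero σ
  rw [hg] at this
  simp only [sub_eq_zero] at this
  exact this.symm
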